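/- If X₁,…,X_d are random variables with X_i ~ F_i such that |X₁|,…,|X_d| are comonotonic and ∏_{i=1}^d X_i ≤ 0 almost surely, then E(∏_{i=1}^d X_i) = −E(∏_{i=1}^d G_i⁻¹(U)) and (X₁,…,X_d) attains the minimum of E(Y₁⋯Y_d) over all couplings with Y_i ~ F_i. -/

import Mathlib

open MeasureTheory Set
open Filter ProbabilityTheory Topology ENNReal

/-- Generalized inverse (quantile function). -/
noncomputable def quantile (ν : Measure ℝ) (u : ℝ) : ℝ :=
  sInf {x : ℝ | u ≤ (ν (Iic x)).toReal}

/-- A family of random variables is comonotonic if all of them are (a.s.) nondecreasing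
functions of a single random variable. -/
def Comonotonic {Ω ι : Type*} [MeasurableSpace Ω] (μ : Measure Ω) (Y : ι → Ω → ℝ) : Prop :=
  ∃ (T : Ω → ℝ) (f : ι → ℝ → ℝ), (∀ i, Monotone (f i)) ∧ ∀ i, ∀ᵐ ω ∂μ, Y i ω = f i (T ω)

/-! ### Auxiliary lemmas -/

section Chain

/-- In a chain of sets indexed by a finite nonempty type, some set is contained in all. -/
lemma chain_exists_min {ι α : Type*} [Fintype ι] [Nonempty ι] (A : ι → Set α)
    (hchain : ∀ i j, A i ⊆ A j ∨ A j ⊆ A i) : ∃ i0, ∀ j, A i0 ⊆ A j := by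
  have H : ∀ s : Finset ι, s.Nonempty → ∃ i0 ∈ s, ∀ j ∈ s, A i0 ⊆ A j := by
    intro s hs
    induction hs using Finset.Nonempty.cons_induction with
    | singleton a => exact ⟨a, by simp⟩
    | cons a s ha hs ih =>
      obtain ⟨i0, hi0, hmin⟩ := ih
      rcases hchain a i0 with h | h
      · exact ⟨a, Finset.mem_cons_self _ _, by
          intro j hj
          rcases Finset.mem_cons.1 hj with rfl | hj
          · exact subset_rfl
          · exact h.trans (hmin j hj)⟩
      · exact ⟨i0, Finset.mem_cons_of_mem hi0, by
          intro j hj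
          rcases Finset.mem_cons.1 hj with rfl | hj
          · exact h
          · exact hmin j hj⟩
  obtain ⟨i0, _, h⟩ := H Finset.univ Finset.univ_nonempty
  exact ⟨i0, fun j => h j (Finset.mem_univ j)⟩

lemma chain_measure_iInter {ι α : Type*} [Fintype ι] [Nonempty ι] [MeasurableSpace α]
    (μ : Measure α) (A : ι → Set α)
    (hchain : ∀ i j, A i ⊆ A j ∨ A j ⊆ A i) : μ (⋂ i, A i) = ⨅ i, μ (A i) := by
  obtain ⟨i0, h⟩ := chain_exists_min A hchain
  have : ⋂ i, A i = A i0 := subset_antisymm (iInter_subset _ _) (subset_iInter h)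
  rw [this]
  exact le_antisymm (le_iInf fun j => measure_mono (h j)) (iInf_le _ i0)

lemma upset_chain {f g : ℝ → ℝ} (hf : Monotone f) (hg : Monotone g) (a b : ℝ) :
    {s | a < f s} ⊆ {s | b < g s} ∨ {s | b < g s} ⊆ {s | a < f s} := by
  by_cases h : {s | a < f s} ⊆ {s | b < g s}
  · left; exact h
  · right
    obtain ⟨x, hx1, hx2⟩ := not_subset.1 h
    intro y hy
    rcases le_total x y with hxy | hxy
    · exact lt_of_lt_of_le hx1 (hf hxy)
    · exact absurd (lt_of_lt_of_le hy (hg hxy)) hx2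

end Chain

section Layercake

lemma layercake_prod_meas {α : Type*} [MeasurableSpace α] (m : Measure α) [SFinite m]
    {d : ℕ} (W : Fin d → α → ℝ) (hW : ∀ i, Measurable (W i)) :
    ∫⁻ a, ∏ i, ENNReal.ofReal (W i a) ∂m
      = ∫⁻ (t : Fin d → ℝ), m {a | ∀ i, t i ∈ Ico 0 (W i a)} ∂(Measure.pi fun _ => volume) := by
  have hE : MeasurableSet {p : α × (Fin d → ℝ) | ∀ i, p.2 i ∈ Ico 0 (W i p.1)} := by
    have : {p : α × (Fin d → ℝ) | ∀ i, p.2 i ∈ Ico 0 (W i p.1)}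
        = ⋂ i, ({p : α × (Fin d → ℝ) | 0 ≤ p.2 i} ∩ {p | p.2 i < W i p.1}) := by
      ext p; simp [Set.mem_Ico, forall_and]
    rw [this]
    refine MeasurableSet.iInter fun i => MeasurableSet.inter ?_ ?_
    · exact measurableSet_le measurable_const (measurable_snd.eval)
    · exact measurableSet_lt (measurable_snd.eval) ((hW i).comp measurable_fst)
  calc ∫⁻ a, ∏ i, ENNReal.ofReal (W i a) ∂m
      = ∫⁻ a, ∫⁻ (t : Fin d → ℝ), {p : α × (Fin d → ℝ) | ∀ i, p.2 i ∈ Ico 0 (W i p.1)}.indicator 1 (a, t) ∂(Measure.pi fun _ => volume) ∂m := by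
        refine lintegral_congr fun a => ?_
        have h1 : ∀ i, ENNReal.ofReal (W i a) = volume (Ico (0:ℝ) (W i a)) := by
          intro i; rw [Real.volume_Ico, sub_zero]
        simp_rw [h1]
        rw [← Measure.pi_pi (fun _ : Fin d => (volume : Measure ℝ)) (fun i => Ico 0 (W i a))]
        have hs : MeasurableSet (univ.pi fun i => Ico (0:ℝ) (W i a)) :=
          MeasurableSet.univ_pi fun i => measurableSet_Ico
        have hset : (univ.pi fun i => Ico (0:ℝ) (W i a))
            = {t : Fin d → ℝ |
                (a, t) ∈ {p : α × (Fin d → ℝ) | ∀ i, p.2 i ∈ Ico 0 (W i p.1)}} := by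
          ext t; simp [Set.mem_pi]
        rw [hset] at hs ⊢
        rw [← lintegral_indicator_one hs]
        exact lintegral_congr fun t => rfl
    _ = ∫⁻ (t : Fin d → ℝ), ∫⁻ a, {p : α × (Fin d → ℝ) | ∀ i, p.2 i ∈ Ico 0 (W i p.1)}.indicator 1 (a, t) ∂m ∂(Measure.pi fun _ => volume) := by
        refine lintegral_lintegral_swap ?_
        exact ((measurable_one.indicator hE).aemeasurable)
    _ = ∫⁻ (t : Fin d → ℝ), m {a | ∀ i, t i ∈ Ico 0 (W i a)} ∂(Measure.pi fun _ => volume) := by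
        refine lintegral_congr fun t => ?_
        have h2 : (fun a => {p : α × (Fin d → ℝ) | ∀ i, p.2 i ∈ Ico 0 (W i p.1)}.indicator 1 (a, t))
            = ({a : α | ∀ i, t i ∈ Ico 0 (W i a)}.indicator (1 : α → ℝ≥0∞)) := by
          funext a; simp only [Set.indicator_apply]; rfl
        rw [h2, lintegral_indicator_one]
        exact hE.preimage (measurable_id.prodMk measurable_const)

lemma layercake_prod {α : Type*} [MeasurableSpace α] (m : Measure α) [SFinite m]
    {d : ℕ} (W : Fin d → α → ℝ) (hW : ∀ i, AEMeasurable (W i) m) :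
    ∫⁻ a, ∏ i, ENNReal.ofReal (W i a) ∂m
      = ∫⁻ (t : Fin d → ℝ), m {a | ∀ i, t i ∈ Ico 0 (W i a)}
          ∂(Measure.pi fun _ => volume) := by
  set W' : Fin d → α → ℝ := fun i => (hW i).mk _ with hW'def
  have hW' : ∀ i, Measurable (W' i) := fun i => (hW i).measurable_mk
  have hae : ∀ᵐ a ∂m, ∀ i, W i a = W' i a := ae_all_iff.2 fun i => (hW i).ae_eq_mk
  have h1 : ∫⁻ a, ∏ i, ENNReal.ofReal (W i a) ∂m
      = ∫⁻ a, ∏ i, ENNReal.ofReal (W' i a) ∂m := by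
    refine lintegral_congr_ae (hae.mono fun a ha => ?_)
    exact Finset.prod_congr rfl fun i _ => by rw [ha i]
  have h2 : ∀ t : Fin d → ℝ, m {a | ∀ i, t i ∈ Ico 0 (W i a)}
      = m {a | ∀ i, t i ∈ Ico 0 (W' i a)} := by
    intro t
    refine measure_congr (eventuallyEq_set.2 (hae.mono fun a ha => ?_))
    simp only [Set.mem_setOf_eq]
    constructor <;> intro h i <;> [rw [← ha i]; rw [ha i]] <;> exact h i
  rw [h1, layercake_prod_meas m W' hW']
  exact lintegral_congr fun t => (h2 t).symm

end Layercake

section QuantileLemmas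
variable (ν : Measure ℝ) [IsProbabilityMeasure ν]

lemma quantile_set_eq (u : ℝ) :
    {x : ℝ | u ≤ (ν (Iic x)).toReal} = {x : ℝ | u ≤ cdf ν x} := by
  ext x; rw [mem_setOf_eq, mem_setOf_eq, cdf_eq_real, measureReal_def]

lemma quantile_set_nonempty {u : ℝ} (hu : u < 1) :
    {x : ℝ | u ≤ (ν (Iic x)).toReal}.Nonempty := by
  rw [quantile_set_eq]
  have h := (tendsto_cdf_atTop ν).eventually (eventually_gt_nhds hu)
  obtain ⟨x, hx⟩ := h.exists
  exact ⟨x, hx.le⟩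

omit [IsProbabilityMeasure ν] in
lemma quantile_set_subset (hν0 : ν (Iio (0:ℝ)) = 0) {u : ℝ} (hu : 0 < u) :
    {x : ℝ | u ≤ (ν (Iic x)).toReal} ⊆ Ici 0 := by
  intro x hx
  by_contra hx0
  simp only [mem_Ici, not_le] at hx0
  have h0 : ν (Iic x) = 0 := measure_mono_null (Iic_subset_Iio.2 hx0) hν0
  rw [mem_setOf_eq, h0] at hx
  simp only [ENNReal.toReal_zero] at hx
  linarith

lemma real_sInf_univ : sInf (univ : Set ℝ) = 0 :=
  Real.sInf_of_not_bddBelow fun ⟨y, hy⟩ => absurd (hy (mem_univ (y - 1))) (by simp)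

omit [IsProbabilityMeasure ν] in
lemma quantile_nonneg (hν0 : ν (Iio (0:ℝ)) = 0) (u : ℝ) : 0 ≤ quantile ν u := by
  rcases le_or_gt u 0 with hu | hu
  · have h : {x : ℝ | u ≤ (ν (Iic x)).toReal} = univ :=
      eq_univ_of_forall fun x => le_trans hu ENNReal.toReal_nonneg
    rw [quantile, h, real_sInf_univ]
  · by_cases hne : {x : ℝ | u ≤ (ν (Iic x)).toReal}.Nonempty
    · exact le_csInf hne fun x hx => quantile_set_subset ν hν0 hu hx
    · rw [quantile, Set.not_nonempty_iff_eq_empty.1 hne, Real.sInf_empty]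

lemma quantile_le_of_le_cdf {u t : ℝ} (ht : 0 ≤ t) (h : u ≤ cdf ν t) : quantile ν u ≤ t := by
  have hmem : t ∈ {x : ℝ | u ≤ (ν (Iic x)).toReal} := by
    rw [quantile_set_eq]; exact h
  by_cases hb : BddBelow {x : ℝ | u ≤ (ν (Iic x)).toReal}
  · exact csInf_le hb hmem
  · rw [quantile, Real.sInf_of_not_bddBelow hb]; exact ht

lemma le_cdf_of_quantile_le {u t : ℝ} (hu : u < 1) (h : quantile ν u ≤ t) : u ≤ cdf ν t := by
  have hne := quantile_set_nonempty ν hu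
  have key : ∀ s, t < s → u ≤ cdf ν s := by
    intro s hs
    have hlt : sInf {x : ℝ | u ≤ (ν (Iic x)).toReal} < s := lt_of_le_of_lt h hs
    by_cases hb : BddBelow {x : ℝ | u ≤ (ν (Iic x)).toReal}
    · obtain ⟨y, hy, hys⟩ := (csInf_lt_iff hb hne).1 hlt
      rw [quantile_set_eq] at hy
      exact hy.trans (monotone_cdf ν hys.le)
    · obtain ⟨y, hy, hys⟩ := not_bddBelow_iff.1 hb s
      rw [quantile_set_eq] at hy
      exact hy.trans (monotone_cdf ν hys.le)
  have hrc : Tendsto (cdf ν) (𝓝[>] t) (𝓝 (cdf ν t)) :=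
    ((cdf ν).right_continuous t).mono_left (nhdsWithin_mono _ Ioi_subset_Ici_self)
  exact ge_of_tendsto hrc (eventually_nhdsWithin_of_forall fun s hs => key s hs)

lemma quantile_monotoneOn (hν0 : ν (Iio (0:ℝ)) = 0) :
    MonotoneOn (quantile ν) (Iio (1:ℝ)) := by
  intro u _ v hv huv
  rcases le_or_gt u 0 with h0 | h0
  · have h : {x : ℝ | u ≤ (ν (Iic x)).toReal} = univ :=
      eq_univ_of_forall fun x => le_trans h0 ENNReal.toReal_nonneg
    rw [quantile, h, real_sInf_univ]
    exact quantile_nonneg ν hν0 v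
  · refine csInf_le_csInf (BddBelow.mono (quantile_set_subset ν hν0 h0) bddBelow_Ici)
      (quantile_set_nonempty ν hv) fun x hx => ?_
    rw [mem_setOf_eq] at hx ⊢
    exact huv.trans hx

end QuantileLemmas

lemma volume_quantile_inter {d : ℕ} (hd : 0 < d) (ν : Fin d → Measure ℝ)
    [∀ i, IsProbabilityMeasure (ν i)] (hν0 : ∀ i, ν i (Iio (0:ℝ)) = 0)
    (t : Fin d → ℝ) (ht : ∀ i, 0 ≤ t i) :
    volume.restrict (Icc (0:ℝ) 1) {u | ∀ i, t i < quantile (ν i) u}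
      = ⨅ i, ν i (Ioi (t i)) := by
  haveI : Nonempty (Fin d) := ⟨⟨0, hd⟩⟩
  rw [Measure.restrict_apply' measurableSet_Icc]
  set B : Fin d → Set ℝ := fun i => Ioo (cdf (ν i) (t i)) 1 with hB
  have hBA : (⋂ i, B i) ⊆ {u | ∀ i, t i < quantile (ν i) u} ∩ Icc 0 1 := by
    intro u hu
    have h1 : ∀ i, cdf (ν i) (t i) < u ∧ u < 1 := fun i => mem_iInter.1 hu i
    have i0 : Fin d := Classical.arbitrary _
    constructor
    · intro i
      by_contra hle
      push_neg at hle
      exact absurd (le_cdf_of_quantile_le (ν i) (h1 i).2 hle) (not_le.2 (h1 i).1)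
    · exact ⟨le_trans (cdf_nonneg _ _) (h1 i0).1.le, (h1 i0).2.le⟩
  have hAB : {u | ∀ i, t i < quantile (ν i) u} ∩ Icc 0 1 ⊆ (⋂ i, B i) ∪ {1} := by
    rintro u ⟨hq, _, hu1⟩
    rcases lt_or_eq_of_le hu1 with hu1 | rfl
    · left
      refine mem_iInter.2 fun i => ⟨?_, hu1⟩
      by_contra hle
      push_neg at hle
      exact absurd (quantile_le_of_le_cdf (ν i) (ht i) hle) (not_le.2 (hq i))
    · right; rfl
  have hvol : volume ({u | ∀ i, t i < quantile (ν i) u} ∩ Icc 0 1)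
      = volume (⋂ i, B i) := by
    refine le_antisymm ?_ (measure_mono hBA)
    calc volume ({u | ∀ i, t i < quantile (ν i) u} ∩ Icc 0 1)
        ≤ volume ((⋂ i, B i) ∪ {1}) := measure_mono hAB
      _ ≤ volume (⋂ i, B i) + volume ({1} : Set ℝ) := measure_union_le _ _
      _ = volume (⋂ i, B i) := by simp
  rw [hvol, chain_measure_iInter]
  · refine iInf_congr fun i => ?_
    rw [hB]
    rw [Real.volume_Ioo]
    have h1 : ν i (Ioi (t i)) = 1 - ν i (Iic (t i)) := by
      rw [← prob_compl_eq_one_sub measurableSet_Iic, compl_Iic]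
    rw [h1, ← ProbabilityTheory.ofReal_cdf (ν i) (t i), ← ENNReal.ofReal_one,
      ← ENNReal.ofReal_sub _ (cdf_nonneg _ _)]
  · intro i j
    rcases le_total (cdf (ν i) (t i)) (cdf (ν j) (t j)) with h | h
    · right; exact Ioo_subset_Ioo_left h
    · left; exact Ioo_subset_Ioo_left h

/-- If the `|X_i|` are comonotonic and `∏ X_i ≤ 0` a.s., then `(X₁,…,X_d)` attains the
minimum expected product among all couplings with the same marginals, and
`E(∏ X_i) = −E(∏ G_i⁻¹(U))` where `G_i` is the distribution function of `|X_i|`. -/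
theorem stmt_5 {Ω : Type*} [MeasurableSpace Ω] (μ : Measure Ω) [IsProbabilityMeasure μ]
    (d : ℕ) (X : Fin d → Ω → ℝ) (hm : ∀ i, Measurable (X i))
    (hcom : Comonotonic μ (fun i ω => |X i ω|))
    (hneg : ∀ᵐ ω ∂μ, ∏ i, X i ω ≤ 0)
    (hInt : Integrable (fun ω => ∏ i, X i ω) μ) :
    (∫ ω, ∏ i, X i ω ∂μ
        = -∫ u in Icc (0:ℝ) 1, ∏ i, quantile (μ.map (fun ω => |X i ω|)) u) ∧
    (∀ (Ω' : Type*) [MeasurableSpace Ω'] (μ' : Measure Ω') [IsProbabilityMeasure μ']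
        (Y : Fin d → Ω' → ℝ), (∀ i, Measurable (Y i)) →
        (∀ i, μ'.map (Y i) = μ.map (X i)) →
        Integrable (fun ω => ∏ i, Y i ω) μ' →
        ∫ ω, ∏ i, X i ω ∂μ ≤ ∫ ω, ∏ i, Y i ω ∂μ') := by
  classical
  -- the case `d = 0` is degenerate
  rcases Nat.eq_zero_or_pos d with rfl | hd
  · exfalso
    have h1 : ∀ᵐ ω ∂μ, (1:ℝ) ≤ 0 := by simpa using hneg
    obtain ⟨ω, hω⟩ := h1.exists
    linarith
  haveI : Nonempty (Fin d) := ⟨⟨0, hd⟩⟩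
  set Z : Fin d → Ω → ℝ := fun i ω => |X i ω| with hZdef
  have hZm : ∀ i, Measurable (Z i) := fun i => (hm i).abs
  set ν : Fin d → Measure ℝ := fun i => μ.map (Z i) with hνdef
  haveI hprob : ∀ i, IsProbabilityMeasure (ν i) :=
    fun i => Measure.isProbabilityMeasure_map (hZm i).aemeasurable
  have hν0 : ∀ i, ν i (Iio (0:ℝ)) = 0 := by
    intro i
    rw [hνdef, Measure.map_apply (hZm i) measurableSet_Iio]
    have h : (Z i) ⁻¹' (Iio 0) = ∅ := by
      ext ω; simp [hZdef, not_lt.2 (abs_nonneg (X i ω))]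
    rw [h, measure_empty]
  have hq0 : ∀ i u, 0 ≤ quantile (ν i) u := fun i u => quantile_nonneg _ (hν0 i) u
  -- the survival functions
  have hsurv : ∀ i (s : ℝ), ν i (Ioi s) = μ {ω | s < Z i ω} := by
    intro i s
    rw [hνdef, Measure.map_apply (hZm i) measurableSet_Ioi]
    rfl
  -- the comonotone side: measure of the intersection is the inf of survivals
  have comono_side : ∀ t : Fin d → ℝ, (∀ i, 0 ≤ t i) →
      μ {ω | ∀ i, t i ∈ Ico 0 (Z i ω)} = ⨅ i, ν i (Ioi (t i)) := by
    obtain ⟨T, f, hfmono, heq⟩ := hcom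
    intro t ht
    have hset : {ω | ∀ i, t i ∈ Ico 0 (Z i ω)} = ⋂ i, {ω | t i < Z i ω} := by
      ext ω
      simp only [mem_setOf_eq, mem_Ico, mem_iInter]
      exact ⟨fun h i => (h i).2, fun h i => ⟨ht i, h i⟩⟩
    rw [hset]
    have hAE : ∀ i, ({ω | t i < Z i ω} : Set Ω) =ᵐ[μ] T ⁻¹' {s | t i < f i s} := by
      intro i
      refine eventuallyEq_set.2 ((heq i).mono fun ω h => ?_)
      simp only [mem_setOf_eq, mem_preimage]
      rw [show Z i ω = f i (T ω) from h]
    have h1 : μ (⋂ i, {ω | t i < Z i ω}) = μ (⋂ i, T ⁻¹' {s | t i < f i s}) := by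
      refine measure_congr (eventuallyEq_set.2 ?_)
      filter_upwards [ae_all_iff.2 fun i => eventuallyEq_set.1 (hAE i)] with ω hω
      simp only [mem_iInter]
      exact ⟨fun h i => (hω i).1 (h i), fun h i => (hω i).2 (h i)⟩
    rw [h1, chain_measure_iInter]
    · exact iInf_congr fun i => ((measure_congr (hAE i)).symm).trans (hsurv i (t i)).symm
    · intro i j
      rcases upset_chain (hfmono i) (hfmono j) (t i) (t j) with h | h
      · left; exact preimage_mono h
      · right; exact preimage_mono h
  -- measurability of quantiles on [0,1]
  have hqm : ∀ i, AEMeasurable (quantile (ν i)) (volume.restrict (Icc (0:ℝ) 1)) := by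
    intro i
    have h1 : AEMeasurable (quantile (ν i)) (volume.restrict (Iio (1:ℝ))) :=
      aemeasurable_restrict_of_monotoneOn measurableSet_Iio (quantile_monotoneOn _ (hν0 i))
    refine h1.mono_measure ?_
    rw [← Measure.restrict_congr_set Ico_ae_eq_Icc]
    exact Measure.restrict_mono (fun x hx => hx.2) le_rfl
  -- the key lintegral identity
  have key : ∫⁻ ω, ∏ i, ENNReal.ofReal (Z i ω) ∂μ
      = ∫⁻ u in Icc (0:ℝ) 1, ∏ i, ENNReal.ofReal (quantile (ν i) u) := by
    rw [layercake_prod μ Z (fun i => (hZm i).aemeasurable),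
      layercake_prod (volume.restrict (Icc (0:ℝ) 1)) (fun i u => quantile (ν i) u) hqm]
    refine lintegral_congr fun t => ?_
    by_cases ht : ∀ i, 0 ≤ t i
    · rw [comono_side t ht, ← volume_quantile_inter hd ν hν0 t ht]
      congr 1
      ext u
      simp only [mem_setOf_eq, mem_Ico]
      exact ⟨fun h i => ⟨ht i, h i⟩, fun h i => (h i).2⟩
    · push_neg at ht
      obtain ⟨i0, hi0⟩ := ht
      have e1 : {ω | ∀ i, t i ∈ Ico 0 (Z i ω)} = ∅ :=
        eq_empty_iff_forall_notMem.2 fun ω h => absurd (h i0).1 (not_le.2 hi0)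
      have e2 : {u : ℝ | ∀ i, t i ∈ Ico 0 (quantile (ν i) u)} = ∅ :=
        eq_empty_iff_forall_notMem.2 fun u h => absurd (h i0).1 (not_le.2 hi0)
      rw [e1, e2, measure_empty, measure_empty]
  -- relating real integrals to lintegrals
  have habs : ∀ᵐ ω ∂μ, ∏ i, X i ω = -∏ i, Z i ω := by
    filter_upwards [hneg] with ω hω
    have h : ∏ i, Z i ω = |∏ i, X i ω| := (Finset.abs_prod _ _).symm
    rw [h, abs_of_nonpos hω, neg_neg]
  have hIX : ∫ ω, ∏ i, X i ω ∂μ = -∫ ω, ∏ i, Z i ω ∂μ := by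
    rw [integral_congr_ae habs, integral_neg]
  have hZint : Integrable (fun ω => ∏ i, Z i ω) μ := by
    have h : (fun ω => ∏ i, Z i ω) = fun ω => |∏ i, X i ω| :=
      funext fun ω => (Finset.abs_prod _ _).symm
    rw [h]
    exact hInt.abs
  have hZeq : ∫ ω, ∏ i, Z i ω ∂μ = (∫⁻ ω, ∏ i, ENNReal.ofReal (Z i ω) ∂μ).toReal := by
    rw [integral_eq_lintegral_of_nonneg_ae
      (ae_of_all _ fun ω => Finset.prod_nonneg fun i _ => abs_nonneg _)
      (Finset.measurable_prod _ fun i _ => hZm i).aestronglyMeasurable]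
    congr 1
    exact lintegral_congr fun ω =>
      ENNReal.ofReal_prod_of_nonneg fun i _ => abs_nonneg _
  have hQeq : ∫ u in Icc (0:ℝ) 1, ∏ i, quantile (ν i) u
      = (∫⁻ u in Icc (0:ℝ) 1, ∏ i, ENNReal.ofReal (quantile (ν i) u)).toReal := by
    rw [integral_eq_lintegral_of_nonneg_ae
      (ae_of_all _ fun u => Finset.prod_nonneg fun i _ => hq0 i u)
      (Finset.aemeasurable_fun_prod _ fun i _ => hqm i).aestronglyMeasurable]
    congr 1
    exact lintegral_congr fun u =>
      ENNReal.ofReal_prod_of_nonneg fun i _ => hq0 i u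
  have hfin : ∫⁻ ω, ∏ i, ENNReal.ofReal (Z i ω) ∂μ < ⊤ := by
    have h : ∫⁻ ω, ∏ i, ENNReal.ofReal (Z i ω) ∂μ
        = ∫⁻ ω, ENNReal.ofReal (∏ i, Z i ω) ∂μ :=
      lintegral_congr fun ω =>
        (ENNReal.ofReal_prod_of_nonneg fun i _ => abs_nonneg _).symm
    rw [h]
    exact hZint.lintegral_lt_top
  constructor
  · rw [hIX, hZeq, hQeq, key]
  · intro Ω' _ μ' _ Y hYm hYlaw hYint
    set W : Fin d → Ω' → ℝ := fun i ω => |Y i ω| with hWdef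
    have hWm : ∀ i, Measurable (W i) := fun i => (hYm i).abs
    have hWlaw : ∀ i, μ'.map (W i) = ν i := by
      intro i
      have h1 : W i = (fun x : ℝ => |x|) ∘ Y i := rfl
      have h2 : Z i = (fun x : ℝ => |x|) ∘ X i := rfl
      have h3 : ν i = μ.map (Z i) := rfl
      rw [h3, h1, h2, ← Measure.map_map measurable_abs (hYm i),
        ← Measure.map_map measurable_abs (hm i), hYlaw i]
    have hWint : Integrable (fun ω => ∏ i, W i ω) μ' := by
      have h : (fun ω => ∏ i, W i ω) = fun ω => |∏ i, Y i ω| :=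
        funext fun ω => (Finset.abs_prod _ _).symm
      rw [h]
      exact hYint.abs
    have hWle : ∫⁻ ω, ∏ i, ENNReal.ofReal (W i ω) ∂μ'
        ≤ ∫⁻ ω, ∏ i, ENNReal.ofReal (Z i ω) ∂μ := by
      rw [layercake_prod μ' W (fun i => (hWm i).aemeasurable),
        layercake_prod μ Z (fun i => (hZm i).aemeasurable)]
      refine lintegral_mono fun t => ?_
      by_cases ht : ∀ i, 0 ≤ t i
      · rw [comono_side t ht]
        refine le_iInf fun i => ?_
        have hs : {ω : Ω' | ∀ j, t j ∈ Ico 0 (W j ω)} ⊆ W i ⁻¹' (Ioi (t i)) :=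
          fun ω h => (h i).2
        calc μ' {ω | ∀ j, t j ∈ Ico 0 (W j ω)} ≤ μ' (W i ⁻¹' (Ioi (t i))) := measure_mono hs
          _ = ν i (Ioi (t i)) := by
              rw [← hWlaw i, Measure.map_apply (hWm i) measurableSet_Ioi]
      · push_neg at ht
        obtain ⟨i0, hi0⟩ := ht
        have e1 : {ω : Ω' | ∀ i, t i ∈ Ico 0 (W i ω)} = ∅ :=
          eq_empty_iff_forall_notMem.2 fun ω h => absurd (h i0).1 (not_le.2 hi0)
        rw [e1, measure_empty]
        exact zero_le
    have hWreal : ∫ ω, ∏ i, W i ω ∂μ' ≤ ∫ ω, ∏ i, Z i ω ∂μ := by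
      have hWeq : ∫ ω, ∏ i, W i ω ∂μ'
          = (∫⁻ ω, ∏ i, ENNReal.ofReal (W i ω) ∂μ').toReal := by
        rw [integral_eq_lintegral_of_nonneg_ae
          (ae_of_all _ fun ω => Finset.prod_nonneg fun i _ => abs_nonneg _)
          (Finset.measurable_prod _ fun i _ => hWm i).aestronglyMeasurable]
        congr 1
        exact lintegral_congr fun ω =>
          ENNReal.ofReal_prod_of_nonneg fun i _ => abs_nonneg _
      rw [hWeq, hZeq]
      exact ENNReal.toReal_mono hfin.ne hWle
    have hlow : ∀ ω, -∏ i, W i ω ≤ ∏ i, Y i ω := by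
      intro ω
      have h : ∏ i, W i ω = |∏ i, Y i ω| := (Finset.abs_prod _ _).symm
      rw [h]
      exact neg_abs_le _
    calc ∫ ω, ∏ i, X i ω ∂μ = -∫ ω, ∏ i, Z i ω ∂μ := hIX
      _ ≤ -∫ ω, ∏ i, W i ω ∂μ' := neg_le_neg hWreal
      _ = ∫ ω, -∏ i, W i ω ∂μ' := (integral_neg _).symm
      _ ≤ ∫ ω, ∏ i, Y i ω ∂μ' := integral_mono hWint.neg hYint hlow
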